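/- If S_p ∈ F_p[[X]] satisfies S_p^{p+1} - S_p^2 - S_p + X = 0 with coefficient sequence (s_n), then s_0 = 0, s_1 = 1, and for n ≥ 2, s_n = Σ_{k=1}^{n-1} s_k w_{n-k}, where w_0 = -1, w_n = -s_n if p ∤ n, and w_n = -s_n + s_{n/p} if p ∣ n (for n ≥ 1). -/

import Mathlib

open PowerSeries Finset

theorem inverse_series_recurrence (p : ℕ) (hp : p.Prime)
    (S : PowerSeries (ZMod p))
    (hS : S ^ (p + 1) - S ^ 2 - S + PowerSeries.X = 0)
    (s : ℕ → ZMod p) (hs : ∀ n, s n = PowerSeries.coeff n S)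
    (w : ℕ → ZMod p) (hw0 : w 0 = -1)
    (hw : ∀ n, 1 ≤ n → w n = if p ∣ n then -s n + s (n / p) else -s n) :
    s 0 = 0 ∧ s 1 = 1 ∧
      ∀ n, 2 ≤ n → s n = ∑ k ∈ Finset.Ico 1 n, s k * w (n - k) := by
  haveI : Fact p.Prime := ⟨hp⟩
  -- s 0 = 0
  have hs0 : s 0 = 0 := by
    have h := congrArg (constantCoeff) hS
    simp only [map_add, map_sub, map_pow, constantCoeff_X, map_zero] at h
    set c := constantCoeff S with hc
    have hcc : c ^ (p + 1) = c ^ 2 := by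
      rw [pow_succ, ZMod.pow_card, sq]
    rw [hcc] at h
    have : c = 0 := by linear_combination -h
    rw [hs 0, coeff_zero_eq_constantCoeff, ← hc, this]
  -- coeff of S^p (Frobenius)
  have hfrob : ∀ n : ℕ, coeff n (S ^ p) =
      if p ∣ n then s (n / p) else 0 := by
    intro n
    have h1 : coeff n (S ^ p) =
        coeff n ((trunc (n + 1) S : PowerSeries (ZMod p)) ^ p) := by
      have := trunc_trunc_pow S (n + 1) p
      have h2 := congrArg (fun q : Polynomial (ZMod p) => q.coeff n) this
      simp only [coeff_trunc, Nat.lt_succ_self, if_pos] at h2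
      exact h2.symm
    rw [h1]
    set T := trunc (n + 1) S with hT
    have h3 : (T : Polynomial (ZMod p)) ^ p =
        Polynomial.map (frobenius (ZMod p) p) (Polynomial.expand (ZMod p) p T) :=
      (Polynomial.map_frobenius_expand p T).symm
    have h4 : coeff n ((T : PowerSeries (ZMod p)) ^ p) = (T ^ p).coeff n := by
      rw [← Polynomial.coe_pow, Polynomial.coeff_coe]
    rw [h4, h3, Polynomial.coeff_map, Polynomial.coeff_expand hp.pos]
    by_cases hdvd : p ∣ n
    · rw [if_pos hdvd, if_pos hdvd]
      have : T.coeff (n / p) = s (n / p) := by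
        rw [hT, coeff_trunc, if_pos (Nat.lt_succ_of_le (Nat.div_le_self n p)), hs]
      rw [this, frobenius_def, ZMod.pow_card]
    · rw [if_neg hdvd, if_neg hdvd, map_zero]
  -- coeff of W := S^p - S - 1
  have hW : ∀ n : ℕ, coeff n (S ^ p - S - 1) = w n := by
    intro n
    rcases Nat.eq_zero_or_pos n with rfl | hn
    · simp only [map_sub, hfrob, Nat.zero_div, dvd_zero, if_pos, coeff_zero_eq_constantCoeff,
        map_one, hw0]
      rw [← coeff_zero_eq_constantCoeff, ← hs 0, hs0]
      ring
    · rw [hw n hn]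
      have hone : coeff n (1 : PowerSeries (ZMod p)) = 0 := by
        rw [coeff_one, if_neg hn.ne']
      rw [map_sub, map_sub, hone, hfrob, ← hs n]
      by_cases hdvd : p ∣ n
      · rw [if_pos hdvd, if_pos hdvd]; ring
      · rw [if_neg hdvd, if_neg hdvd]; ring
  -- main equation: S * W = -X
  have hkey : S * (S ^ p - S - 1) = -PowerSeries.X := by
    have : S ^ (p + 1) = S * S ^ p := by rw [pow_succ, mul_comm]
    linear_combination hS - this
  have hsum : ∀ n : ℕ, (∑ k ∈ Finset.range (n + 1), s k * w (n - k)) =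
      coeff n (-PowerSeries.X) := by
    intro n
    have h := congrArg (coeff n) hkey
    rw [coeff_mul, Finset.Nat.sum_antidiagonal_eq_sum_range_succ_mk] at h
    rw [← h]
    refine Finset.sum_congr rfl fun k hk => ?_
    rw [← hs k, hW]
  constructor
  · exact hs0
  constructor
  · have h := hsum 1
    rw [Finset.sum_range_succ, Finset.sum_range_one] at h
    simp only [Nat.sub_self, Nat.sub_zero, hs0, hw0, map_neg, coeff_one_X] at h
    linear_combination -h
  · intro n hn
    have h := hsum n
    have hxn : coeff n (-PowerSeries.X : PowerSeries (ZMod p)) = 0 := by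
      rw [map_neg, coeff_X, if_neg (by omega)]
      exact neg_zero
    rw [hxn] at h
    rw [Finset.range_eq_Ico, show n + 1 = n + 1 from rfl] at h
    have hsplit : (∑ k ∈ Finset.Ico 0 (n + 1), s k * w (n - k)) =
        s 0 * w n + (∑ k ∈ Finset.Ico 1 n, s k * w (n - k)) + s n * w 0 := by
      rw [Finset.sum_eq_sum_Ico_succ_bot (by omega : 0 < n + 1)]
      rw [Finset.sum_Ico_succ_top (by omega : 1 ≤ n)]
      simp only [Nat.sub_zero, Nat.sub_self]
      ring
    rw [hsplit, hs0, hw0] at h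
    have : (∑ k ∈ Finset.Ico 1 n, s k * w (n - k)) - s n = 0 := by
      linear_combination h
    linear_combination -this
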